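/- Let g_i, g_j be integrable on [0,1] with (v,w) ↦ |g_i(v)g_j(w)| integrable on the relevant domains. Then ∫_0^1 (1/(1−u))² (∫_u^1 (1−v)g_i(v) dv)(∫_u^1 (1−w)g_j(w) dw) du = ∫_0^1 ∫_0^1 g_i(v) g_j(w) (min(v,w) − vw) dv dw. -/

import Mathlib

open intervalIntegral MeasureTheory

lemma CGJ_aux_ftc (m : ℝ) (h0 : 0 ≤ m) (h1 : m < 1) :
    ∫ u in Set.Icc (0:ℝ) m, (1 / (1 - u)) ^ 2 = m / (1 - m) := by
  rw [MeasureTheory.integral_Icc_eq_integral_Ioc, ← intervalIntegral.integral_of_le h0]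
  have hder : ∀ u ∈ Set.uIcc (0:ℝ) m,
      HasDerivAt (fun x => (1 - x)⁻¹) ((1 / (1 - u)) ^ 2) u := by
    intro u hu
    rw [Set.uIcc_of_le h0] at hu
    have hne : 1 - u ≠ 0 := by
      have := hu.2; intro h; nlinarith
    have h := ((hasDerivAt_id u).const_sub 1).inv hne
    refine h.congr_deriv ?_
    simp only [id, neg_neg, one_div, inv_pow]
  have hcont : IntervalIntegrable (fun u => (1 / (1 - u)) ^ 2) volume 0 m := by
    apply ContinuousOn.intervalIntegrable
    apply ContinuousOn.pow
    apply ContinuousOn.div continuousOn_const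
    · exact (continuousOn_const.sub continuousOn_id)
    · intro u hu
      rw [Set.uIcc_of_le h0] at hu
      have := hu.2; intro h; nlinarith
  rw [intervalIntegral.integral_eq_sub_of_hasDerivAt hder hcont]
  have hne : 1 - m ≠ 0 := by intro h; nlinarith
  field_simp
  ring

lemma CGJ_aux_alg (v w : ℝ) (hm : min v w < 1) :
    (1 - v) * (1 - w) * (min v w / (1 - min v w)) = min v w - v * w := by
  rcases le_total v w with h | h
  · rw [min_eq_left h] at *
    have hne : (1:ℝ) - v ≠ 0 := by intro hh; nlinarith
    field_simp
  · rw [min_eq_right h] at *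
    have hne : (1:ℝ) - w ≠ 0 := by intro hh; nlinarith
    field_simp

theorem CGJ_eq_kernel_form (gi gj : ℝ → ℝ)
    (hgi : IntervalIntegrable gi volume 0 1)
    (hgj : IntervalIntegrable gj volume 0 1)
    (habs : IntegrableOn
      (fun p : ℝ × ℝ × ℝ =>
        (1 / (1 - p.1)) ^ 2 * ((1 - p.2.1) * (1 - p.2.2) * gi p.2.1 * gj p.2.2))
      {p : ℝ × ℝ × ℝ | p.2.1 ∈ Set.Icc (0:ℝ) 1 ∧ p.2.2 ∈ Set.Icc (0:ℝ) 1
        ∧ 0 ≤ p.1 ∧ p.1 ≤ min p.2.1 p.2.2} volume) :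
    ∫ u in (0:ℝ)..1, (1 / (1 - u)) ^ 2
        * (∫ v in u..1, (1 - v) * gi v) * (∫ w in u..1, (1 - w) * gj w)
      = ∫ v in (0:ℝ)..1, ∫ w in (0:ℝ)..1, gi v * gj w * (min v w - v * w) := by
  classical
  set f : ℝ × ℝ × ℝ → ℝ := fun p =>
    (1 / (1 - p.1)) ^ 2 * ((1 - p.2.1) * (1 - p.2.2) * gi p.2.1 * gj p.2.2) with hfdef
  set Ω : Set (ℝ × ℝ × ℝ) := {p | p.2.1 ∈ Set.Icc (0:ℝ) 1 ∧ p.2.2 ∈ Set.Icc (0:ℝ) 1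
    ∧ 0 ≤ p.1 ∧ p.1 ≤ min p.2.1 p.2.2} with hΩdef
  have hΩmeas : MeasurableSet Ω := by
    apply MeasurableSet.inter
    · exact (measurable_fst.comp measurable_snd) measurableSet_Icc
    apply MeasurableSet.inter
    · exact (measurable_snd.comp measurable_snd) measurableSet_Icc
    apply MeasurableSet.inter
    · exact measurableSet_le measurable_const measurable_fst
    · exact measurableSet_le measurable_fst
        ((measurable_fst.comp measurable_snd).min (measurable_snd.comp measurable_snd))
  have hInd : Integrable (Ω.indicator f)
      ((volume : Measure ℝ).prod (volume : Measure (ℝ × ℝ))) := by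
    rw [← MeasureTheory.Measure.volume_eq_prod]
    exact (integrable_indicator_iff hΩmeas).2 habs
  -- integrability of gi, gj on Icc 0 1
  have hgi' : IntegrableOn gi (Set.Icc (0:ℝ) 1) volume :=
    (intervalIntegrable_iff_integrableOn_Icc_of_le (by norm_num)).1 hgi
  have hgj' : IntegrableOn gj (Set.Icc (0:ℝ) 1) volume :=
    (intervalIntegrable_iff_integrableOn_Icc_of_le (by norm_num)).1 hgj
  -- STEP 1 : slice in u
  set H : ℝ → ℝ := fun u => (1 / (1 - u)) ^ 2
      * (∫ v in Set.Icc u 1, (1 - v) * gi v) * (∫ w in Set.Icc u 1, (1 - w) * gj w) with hHdef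
  have slice1 : ∀ u : ℝ, (∫ q : ℝ × ℝ, Ω.indicator f (u, q))
      = (Set.Icc (0:ℝ) 1).indicator H u := by
    intro u
    by_cases hu : u ∈ Set.Icc (0:ℝ) 1
    · have hfun : (fun q : ℝ × ℝ => Ω.indicator f (u, q))
          = (Set.Icc u 1 ×ˢ Set.Icc u 1).indicator
            (fun q : ℝ × ℝ => (1 / (1 - u)) ^ 2
              * (((1 - q.1) * gi q.1) * ((1 - q.2) * gj q.2))) := by
        funext q
        by_cases hq : q ∈ Set.Icc u 1 ×ˢ Set.Icc u 1
        · have hmem : (u, q) ∈ Ω := by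
            refine ⟨⟨hu.1.trans hq.1.1, hq.1.2⟩, ⟨hu.1.trans hq.2.1, hq.2.2⟩, hu.1,
              le_min hq.1.1 hq.2.1⟩
          rw [Set.indicator_of_mem hmem, Set.indicator_of_mem hq]
          show f (u, q) = _
          simp only [hfdef]
          ring
        · have hmem : (u, q) ∉ Ω := by
            intro hmem
            exact hq ⟨⟨le_trans hmem.2.2.2 (min_le_left _ _), hmem.1.2⟩,
              ⟨le_trans hmem.2.2.2 (min_le_right _ _), hmem.2.1.2⟩⟩
          rw [Set.indicator_of_notMem hmem, Set.indicator_of_notMem hq]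
      rw [hfun, MeasureTheory.integral_indicator (measurableSet_Icc.prod measurableSet_Icc),
        Set.indicator_of_mem hu, MeasureTheory.Measure.volume_eq_prod,
        MeasureTheory.integral_const_mul _ _,
        MeasureTheory.setIntegral_prod_mul (fun v => (1 - v) * gi v)
          (fun w => (1 - w) * gj w) (Set.Icc u 1) (Set.Icc u 1)]
      simp only [hHdef]
      ring
    · have hfun : ∀ q : ℝ × ℝ, Ω.indicator f (u, q) = 0 := by
        intro q
        apply Set.indicator_of_notMem
        intro hmem
        exact hu ⟨hmem.2.2.1, le_trans hmem.2.2.2 (le_trans (min_le_left _ _) hmem.1.2)⟩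
      simp only [hfun, MeasureTheory.integral_zero, Set.indicator_of_notMem hu]
  -- STEP 2 : slice in (v, w)
  set G : ℝ × ℝ → ℝ := fun q => (∫ u in Set.Icc (0:ℝ) (min q.1 q.2), (1 / (1 - u)) ^ 2)
      * ((1 - q.1) * (1 - q.2) * gi q.1 * gj q.2) with hGdef
  have slice2 : ∀ q : ℝ × ℝ, (∫ u : ℝ, Ω.indicator f (u, q))
      = (Set.Icc (0:ℝ) 1 ×ˢ Set.Icc (0:ℝ) 1).indicator G q := by
    intro q
    by_cases hq : q ∈ Set.Icc (0:ℝ) 1 ×ˢ Set.Icc (0:ℝ) 1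
    · have hfun : (fun u : ℝ => Ω.indicator f (u, q))
          = (Set.Icc (0:ℝ) (min q.1 q.2)).indicator
            (fun u : ℝ => (1 / (1 - u)) ^ 2
              * ((1 - q.1) * (1 - q.2) * gi q.1 * gj q.2)) := by
        funext u
        by_cases hu : u ∈ Set.Icc (0:ℝ) (min q.1 q.2)
        · have hmem : (u, q) ∈ Ω := ⟨hq.1, hq.2, hu.1, hu.2⟩
          rw [Set.indicator_of_mem hmem, Set.indicator_of_mem hu]
        · have hmem : (u, q) ∉ Ω := fun hmem => hu ⟨hmem.2.2.1, hmem.2.2.2⟩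
          rw [Set.indicator_of_notMem hmem, Set.indicator_of_notMem hu]
      rw [hfun, MeasureTheory.integral_indicator measurableSet_Icc,
        MeasureTheory.integral_mul_const, Set.indicator_of_mem hq]
    · have hfun : ∀ u : ℝ, Ω.indicator f (u, q) = 0 := by
        intro u
        apply Set.indicator_of_notMem
        intro hmem
        exact hq ⟨hmem.1, hmem.2.1⟩
      simp only [hfun, MeasureTheory.integral_zero, Set.indicator_of_notMem hq]
  -- combine via Fubini
  have fubini : (∫ u : ℝ, ∫ q : ℝ × ℝ, Ω.indicator f (u, q))
      = ∫ q : ℝ × ℝ, ∫ u : ℝ, Ω.indicator f (u, q) := by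
    rw [← MeasureTheory.integral_prod _ hInd, MeasureTheory.integral_prod_symm _ hInd]
  -- LHS equals the u-iterated integral
  have hLHS : (∫ u in (0:ℝ)..1, (1 / (1 - u)) ^ 2
        * (∫ v in u..1, (1 - v) * gi v) * (∫ w in u..1, (1 - w) * gj w))
      = ∫ u : ℝ, ∫ q : ℝ × ℝ, Ω.indicator f (u, q) := by
    simp only [slice1]
    rw [MeasureTheory.integral_indicator measurableSet_Icc,
      MeasureTheory.integral_Icc_eq_integral_Ioc, ← intervalIntegral.integral_of_le
      (by norm_num : (0:ℝ) ≤ 1)]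
    apply intervalIntegral.integral_congr
    intro u hu
    rw [Set.uIcc_of_le (by norm_num : (0:ℝ) ≤ 1)] at hu
    simp only [hHdef]
    rw [intervalIntegral.integral_of_le hu.2, intervalIntegral.integral_of_le hu.2,
      ← MeasureTheory.integral_Icc_eq_integral_Ioc, ← MeasureTheory.integral_Icc_eq_integral_Ioc]
  -- a.e. identification of G with the kernel on the square
  have hnull : (volume : Measure (ℝ × ℝ)) {q : ℝ × ℝ | q.1 = 1} = 0 := by
    have : {q : ℝ × ℝ | q.1 = 1} = ({1} : Set ℝ) ×ˢ (Set.univ : Set ℝ) := by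
      ext q; simp only [Set.mem_setOf_eq, Set.mem_prod, Set.mem_singleton_iff, Set.mem_univ, and_true]
    rw [this, MeasureTheory.Measure.volume_eq_prod, MeasureTheory.Measure.prod_prod,
      Real.volume_singleton, zero_mul]
  have hae : ∀ᵐ q : ℝ × ℝ, q.1 ≠ 1 := by
    rw [MeasureTheory.ae_iff]
    convert hnull using 2
    simp
  -- integrability of kernel on the square
  have hker : IntegrableOn (fun q : ℝ × ℝ => (gi q.1 * gj q.2) * (min q.1 q.2 - q.1 * q.2))
      (Set.Icc (0:ℝ) 1 ×ˢ Set.Icc (0:ℝ) 1)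
      ((volume : Measure ℝ).prod (volume : Measure ℝ)) := by
    have h1 : Integrable (fun q : ℝ × ℝ => gi q.1 * gj q.2)
        ((volume.restrict (Set.Icc (0:ℝ) 1)).prod (volume.restrict (Set.Icc (0:ℝ) 1))) :=
      hgi'.mul_prod hgj'
    rw [MeasureTheory.Measure.prod_restrict] at h1
    refine MeasureTheory.Integrable.mono' (g := fun q : ℝ × ℝ => |gi q.1 * gj q.2|)
      h1.abs ?_ ?_
    · exact h1.aestronglyMeasurable.mul
        ((continuous_fst.min continuous_snd).sub (continuous_fst.mul continuous_snd)
          ).aestronglyMeasurable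
    · rw [MeasureTheory.ae_restrict_iff' (measurableSet_Icc.prod measurableSet_Icc)]
      filter_upwards with q hq
      have hv := hq.1
      have hw := hq.2
      have hm1 : 0 ≤ min q.1 q.2 := le_min hv.1 hw.1
      have hm2 : min q.1 q.2 ≤ 1 := le_trans (min_le_left _ _) hv.2
      have hp1 : 0 ≤ q.1 * q.2 := mul_nonneg hv.1 hw.1
      have hp2 : q.1 * q.2 ≤ 1 := by nlinarith [hv.1, hv.2, hw.1, hw.2]
      have hb : |min q.1 q.2 - q.1 * q.2| ≤ 1 := by
        rw [abs_le]; constructor <;> linarith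
      calc ‖gi q.1 * gj q.2 * (min q.1 q.2 - q.1 * q.2)‖
          = |gi q.1 * gj q.2| * |min q.1 q.2 - q.1 * q.2| := abs_mul _ _
        _ ≤ |gi q.1 * gj q.2| * 1 := by
            exact mul_le_mul_of_nonneg_left hb (abs_nonneg _)
        _ = |gi q.1 * gj q.2| := mul_one _
  -- RHS equals the q-iterated integral
  have hRHS : (∫ q : ℝ × ℝ, ∫ u : ℝ, Ω.indicator f (u, q))
      = ∫ v in (0:ℝ)..1, ∫ w in (0:ℝ)..1, gi v * gj w * (min v w - v * w) := by
    simp only [slice2]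
    rw [MeasureTheory.integral_indicator (measurableSet_Icc.prod measurableSet_Icc)]
    have step4 : ∫ q in Set.Icc (0:ℝ) 1 ×ˢ Set.Icc (0:ℝ) 1, G q
        = ∫ q in Set.Icc (0:ℝ) 1 ×ˢ Set.Icc (0:ℝ) 1,
            (gi q.1 * gj q.2) * (min q.1 q.2 - q.1 * q.2) := by
      apply MeasureTheory.setIntegral_congr_ae (measurableSet_Icc.prod measurableSet_Icc)
      filter_upwards [hae] with q hq1 hq
      have hv := hq.1
      have hw := hq.2
      have hm0 : 0 ≤ min q.1 q.2 := le_min hv.1 hw.1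
      have hm1 : min q.1 q.2 < 1 :=
        lt_of_le_of_lt (min_le_left _ _) (lt_of_le_of_ne hv.2 hq1)
      simp only [hGdef]
      rw [CGJ_aux_ftc _ hm0 hm1]
      have h := CGJ_aux_alg q.1 q.2 hm1
      linear_combination (gi q.1 * gj q.2) * h
    rw [step4, MeasureTheory.Measure.volume_eq_prod, MeasureTheory.setIntegral_prod _ hker,
      MeasureTheory.integral_Icc_eq_integral_Ioc,
      ← intervalIntegral.integral_of_le (by norm_num : (0:ℝ) ≤ 1)]
    apply intervalIntegral.integral_congr
    intro v _
    show (∫ y in Set.Icc (0:ℝ) 1, gi v * gj y * (min v y - v * y))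
        = ∫ w in (0:ℝ)..1, gi v * gj w * (min v w - v * w)
    rw [MeasureTheory.integral_Icc_eq_integral_Ioc,
      ← intervalIntegral.integral_of_le (by norm_num : (0:ℝ) ≤ 1)]
  rw [hLHS, fubini, hRHS]
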